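/- Let G = (V,E) be a finite simple graph of treewidth at most k−1 and let W ⊆ V. Then there exists a balanced W-separator of G of size at most k, i.e., a set S ⊆ V with |S| ≤ k such that every connected component of G − S contains at most (1/2)·|W| vertices of W. -/

import Mathlib

/-- A tree decomposition of `G`: a tree `T` with a bag `B x` for each node `x` such that
every vertex is in some bag, every edge is covered by some bag, and for any node `z` on the
path between `x` and `y` in the tree, `B x ∩ B y ⊆ B z`. -/
def IsTreeDecomp {V ι : Type} [DecidableEq V] (G : SimpleGraph V) (T : SimpleGraph ι)
    (B : ι → Finset V) : Prop :=
  T.IsTree ∧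
  (∀ v : V, ∃ x : ι, v ∈ B x) ∧
  (∀ u v : V, G.Adj u v → ∃ x : ι, u ∈ B x ∧ v ∈ B x) ∧
  (∀ (x y z : ι) (p : T.Walk x y), p.IsPath → z ∈ p.support → B x ∩ B y ⊆ B z)

/-- The set of vertices of `G` belonging to the connected component `C` of the subgraph of
`G` induced on `s`. -/
def compSet {V : Type} (G : SimpleGraph V) (s : Set V)
    (C : (G.induce s).ConnectedComponent) : Set V :=
  {v | ∃ h : v ∈ s, (G.induce s).connectedComponentMk ⟨v, h⟩ = C}

open SimpleGraph in
noncomputable def pth {ι : Type} {T : SimpleGraph ι} (hT : T.IsTree) (a b : ι) : T.Walk a b :=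
  (hT.existsUnique_path a b).choose

section TreeLemmas
set_option linter.unusedSectionVars false
open SimpleGraph
variable {ι : Type} [DecidableEq ι] {T : SimpleGraph ι} (hT : T.IsTree)

lemma pth_isPath (a b : ι) : (pth hT a b).IsPath :=
  (hT.existsUnique_path a b).choose_spec.1

lemma pth_unique {a b : ι} (p : T.Walk a b) (hp : p.IsPath) : p = pth hT a b :=
  (hT.existsUnique_path a b).choose_spec.2 p hp

lemma pth_self (a : ι) : pth hT a a = Walk.nil :=
  (pth_unique hT _ Walk.IsPath.nil).symm

lemma pth_reverse (a b : ι) : (pth hT a b).reverse = pth hT b a :=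
  pth_unique hT _ ((pth_isPath hT a b).reverse)

lemma sameSide_symm {x a b : ι} (h : x ∉ (pth hT a b).support) :
    x ∉ (pth hT b a).support := by
  rw [← pth_reverse hT a b, Walk.support_reverse]
  simpa using h

lemma sameSide_trans {x a b c : ι} (h1 : x ∉ (pth hT a b).support)
    (h2 : x ∉ (pth hT b c).support) : x ∉ (pth hT a c).support := by
  have heq : ((pth hT a b).append (pth hT b c)).bypass = pth hT a c :=
    pth_unique hT _ (Walk.bypass_isPath _)
  intro hx
  have hmem := Walk.support_bypass_subset _ (heq ▸ hx)
  rw [Walk.support_append] at hmem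
  rcases List.mem_append.1 hmem with h | h
  · exact h1 h
  · exact h2 (List.mem_of_mem_tail h)

lemma dist_pth (a b : ι) : T.dist a b = (pth hT a b).length := by
  refine le_antisymm (SimpleGraph.dist_le _) ?_
  obtain ⟨p, hp⟩ := (hT.isConnected a b).exists_walk_length_eq_dist
  calc (pth hT a b).length = p.bypass.length := by
        rw [← pth_unique hT p.bypass p.bypass_isPath]
    _ ≤ p.length := Walk.length_bypass_le _
    _ = _ := hp

lemma firstStep {x a b y z : ι} {hxy : T.Adj x y} {hxz : T.Adj x z}
    {q : T.Walk y a} {r : T.Walk z b}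
    (hq : (Walk.cons hxy q).IsPath) (hr : (Walk.cons hxz r).IsPath)
    (hss : x ∉ (pth hT a b).support) : y = z := by
  by_contra hne
  rw [Walk.cons_isPath_iff] at hq hr
  have hdisj : ∀ c, c ∈ q.support → c ∈ r.support → False := by
    intro c hcq hcr
    have hQ1 : (Walk.cons hxy (q.takeUntil c hcq)).IsPath := by
      rw [Walk.cons_isPath_iff]
      exact ⟨hq.1.takeUntil _, fun hx => hq.2 (Walk.support_takeUntil_subset _ _ hx)⟩
    have hR1 : (Walk.cons hxz (r.takeUntil c hcr)).IsPath := by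
      rw [Walk.cons_isPath_iff]
      exact ⟨hr.1.takeUntil _, fun hx => hr.2 (Walk.support_takeUntil_subset _ _ hx)⟩
    have heq := (pth_unique hT _ hQ1).trans (pth_unique hT _ hR1).symm
    have h1 : (Walk.cons hxy (q.takeUntil c hcq)).getVert 1 =
        (Walk.cons hxz (r.takeUntil c hcr)).getVert 1 := by rw [heq]
    simp only [Walk.getVert_cons_succ, Walk.getVert_zero] at h1
    exact hne h1
  have hwP : ((Walk.cons hxy q).reverse.append (Walk.cons hxz r)).IsPath := by
    rw [Walk.isPath_def, Walk.support_append, Walk.support_reverse, Walk.support_cons,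
      Walk.support_cons, List.tail_cons, List.nodup_append]
    refine ⟨List.nodup_reverse.2 ?_, ?_, ?_⟩
    · rw [← Walk.support_cons hxy q, ← Walk.isPath_def]
      exact Walk.cons_isPath_iff hxy q |>.2 hq
    · exact hr.1.2
    · intro c hc c' hc' hcc
      subst hcc
      rcases List.mem_cons.1 (List.mem_reverse.1 hc) with h | h
      · exact hr.2 (h ▸ hc')
      · exact hdisj c h hc'
  have := pth_unique hT _ hwP
  rw [← this] at hss
  apply hss
  rw [Walk.support_append]
  apply List.mem_append_left
  rw [Walk.support_reverse, List.mem_reverse, Walk.support_cons]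
  exact List.mem_cons_self

end TreeLemmas

/-- If `G` has treewidth at most `k - 1` (i.e. it has a tree decomposition all of whose bags
have at most `k` vertices) and `W ⊆ V`, then `G` has a balanced `W`-separator of size at
most `k`: a set `S` with `|S| ≤ k` such that every connected component of `G − S` contains
at most `(1/2) * |W|` vertices of `W`. -/
theorem exists_balanced_W_separator {V : Type} [Fintype V] [DecidableEq V]
    (G : SimpleGraph V) (k : ℕ)
    (htw : ∃ (ι : Type) (T : SimpleGraph ι) (B : ι → Finset V),
      IsTreeDecomp G T B ∧ ∀ x : ι, (B x).card ≤ k)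
    (W : Finset V) :
    ∃ S : Finset V, S.card ≤ k ∧
      ∀ C : (G.induce {v : V | v ∉ S}).ConnectedComponent,
        2 * ((W : Set V) ∩ compSet G {v : V | v ∉ S} C).ncard ≤ W.card := by
  classical
  by_contra hcon
  push_neg at hcon
  obtain ⟨ι, T, Bg, hTD, hk⟩ := htw
  have _instι : DecidableEq ι := Classical.decEq ι
  obtain ⟨hT, hvert, hedge, hpath⟩ := hTD
  have hι : Nonempty ι := hT.isConnected.nonempty
  choose nd hnd using hvert
  choose Cx hCx using fun x : ι => hcon (Bg x) (hk x)
  set A : ι → Finset V :=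
    fun x => W.filter (fun w => w ∈ compSet G {v : V | v ∉ Bg x} (Cx x)) with hA
  have hheavy : ∀ x, W.card < 2 * (A x).card := by
    intro x
    have h := hCx x
    have : ((W : Set V) ∩ compSet G {v : V | v ∉ Bg x} (Cx x)) = ↑(A x) := by
      ext v; simp [hA, Set.mem_inter_iff]
    rwa [this, Set.ncard_coe_finset] at h
  have hAne : ∀ x : ι, ∃ w, w ∈ A x := by
    intro x
    have := hheavy x
    have h0 : 0 < (A x).card := by omega
    exact Finset.card_pos.1 h0
  choose w0 hw0 using hAne
  have hmemA : ∀ x w, w ∈ A x → w ∈ W ∧ ∃ h : w ∉ Bg x,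
      (G.induce {v : V | v ∉ Bg x}).connectedComponentMk ⟨w, h⟩ = Cx x := by
    intro x w hw
    rw [hA, Finset.mem_filter] at hw
    exact ⟨hw.1, hw.2⟩
  have hndne : ∀ (w : V) (x : ι), w ∉ Bg x → nd w ≠ x := by
    intro w x hw heq
    exact hw (heq ▸ hnd w)
  have bagSide : ∀ (x : ι) (v : V), v ∉ Bg x → ∀ a b, v ∈ Bg a → v ∈ Bg b →
      x ∉ (pth hT a b).support := by
    intro x v hv a b ha hb hx
    exact hv (hpath a b x (pth hT a b) (pth_isPath hT a b) hx (Finset.mem_inter.2 ⟨ha, hb⟩))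
  have sideChain : ∀ (x : ι) (u w : {v : V | v ∉ Bg x})
      (p : (G.induce {v : V | v ∉ Bg x}).Walk u w),
      x ∉ (pth hT (nd u.1) (nd w.1)).support := by
    intro x u w p
    induction p with
    | nil =>
      rename_i u
      rw [pth_self hT]
      simp only [SimpleGraph.Walk.support_nil, List.mem_singleton]
      exact fun h => hndne u.1 x u.2 h.symm
    | cons h p ih =>
      rename_i a c w'
      have hadj : G.Adj a.1 c.1 := h
      obtain ⟨n, han, hcn⟩ := hedge a.1 c.1 hadj
      have s1 : x ∉ (pth hT (nd a.1) n).support := bagSide x a.1 a.2 _ _ (hnd a.1) han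
      have s2 : x ∉ (pth hT n (nd c.1)).support := bagSide x c.1 c.2 _ _ hcn (hnd c.1)
      exact sameSide_trans hT (sameSide_trans hT s1 s2) ih
  set Φ : ι → ℕ := fun x => ∑ w ∈ W, T.dist x (nd w) with hΦ
  have hrne : (Set.range Φ).Nonempty := Set.range_nonempty _
  obtain ⟨x, hx⟩ := Nat.sInf_mem hrne
  have hmin : ∀ y, Φ x ≤ Φ y := fun y => hx ▸ Nat.sInf_le ⟨y, rfl⟩
  -- heavy vertex at x
  obtain ⟨hw0W, hw0B, hw0C⟩ := hmemA x _ (hw0 x)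
  have ha0 : nd (w0 x) ≠ x := hndne _ _ hw0B
  obtain ⟨y, hxy, q0, hq0⟩ := SimpleGraph.Walk.exists_eq_cons_of_ne ha0.symm
    (pth hT x (nd (w0 x)))
  have h1 : ∀ w ∈ A x, T.dist y (nd w) + 1 = T.dist x (nd w) := by
    intro w hw
    obtain ⟨hwW, hwB, hwC⟩ := hmemA x w hw
    have hndw : nd w ≠ x := hndne _ _ hwB
    obtain ⟨z, hxz, q1, hq1⟩ := SimpleGraph.Walk.exists_eq_cons_of_ne hndw.symm
      (pth hT x (nd w))
    have hreach : (G.induce {v : V | v ∉ Bg x}).Reachable ⟨w, hwB⟩ ⟨w0 x, hw0B⟩ :=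
      SimpleGraph.ConnectedComponent.exact (hwC.trans hw0C.symm)
    obtain ⟨p⟩ := hreach
    have hside : x ∉ (pth hT (nd w) (nd (w0 x))).support := sideChain x ⟨w, hwB⟩ ⟨w0 x, hw0B⟩ p
    have hzy : z = y := firstStep hT (hq1 ▸ pth_isPath hT x (nd w))
      (hq0 ▸ pth_isPath hT x (nd (w0 x))) hside
    have hq1P : q1.IsPath := ((SimpleGraph.Walk.cons_isPath_iff _ _).1
      (hq1 ▸ pth_isPath hT x (nd w))).1
    have hdz : T.dist z (nd w) = q1.length := by
      rw [dist_pth hT, ← pth_unique hT q1 hq1P]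
    have hdx : T.dist x (nd w) = q1.length + 1 := by
      rw [dist_pth hT, hq1, SimpleGraph.Walk.length_cons]
    rw [← hzy, hdz, hdx]
  have h2 : ∀ w ∈ W, T.dist y (nd w) ≤ T.dist x (nd w) + 1 := by
    intro w _
    have hd1 : T.dist y x = 1 := SimpleGraph.dist_eq_one_iff_adj.2 hxy.symm
    calc T.dist y (nd w) ≤ T.dist y x + T.dist x (nd w) := hT.isConnected.dist_triangle
      _ = T.dist x (nd w) + 1 := by omega
  -- sums
  have hsub : A x ⊆ W := Finset.filter_subset _ _
  have hsy : (∑ w ∈ W \ A x, T.dist y (nd w)) + (∑ w ∈ A x, T.dist y (nd w)) =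
      ∑ w ∈ W, T.dist y (nd w) := Finset.sum_sdiff hsub
  have hsx : (∑ w ∈ W \ A x, T.dist x (nd w)) + (∑ w ∈ A x, T.dist x (nd w)) =
      ∑ w ∈ W, T.dist x (nd w) := Finset.sum_sdiff hsub
  have e1 : (∑ w ∈ A x, T.dist x (nd w)) =
      (∑ w ∈ A x, T.dist y (nd w)) + (A x).card := by
    have hcongr : ∀ w ∈ A x, T.dist x (nd w) = T.dist y (nd w) + 1 :=
      fun w hw => (h1 w hw).symm
    rw [Finset.sum_congr rfl hcongr, Finset.sum_add_distrib, Finset.sum_const,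
      smul_eq_mul, mul_one]
  have e2 : (∑ w ∈ W \ A x, T.dist y (nd w)) ≤
      (∑ w ∈ W \ A x, T.dist x (nd w)) + (W \ A x).card := by
    calc (∑ w ∈ W \ A x, T.dist y (nd w))
        ≤ ∑ w ∈ W \ A x, (T.dist x (nd w) + 1) :=
          Finset.sum_le_sum (fun w hw => h2 w (Finset.mem_sdiff.1 hw).1)
      _ = _ := by rw [Finset.sum_add_distrib, Finset.sum_const, smul_eq_mul, mul_one]
  have hcard : (W \ A x).card + (A x).card = W.card := by
    rw [Finset.card_sdiff_of_subset hsub]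
    have := Finset.card_le_card hsub
    omega
  have hΦy : Φ y = ∑ w ∈ W, T.dist y (nd w) := rfl
  have hΦx : Φ x = ∑ w ∈ W, T.dist x (nd w) := rfl
  have hh := hheavy x
  have hlt : Φ y < Φ x := by
    rw [hΦy, hΦx]
    omega
  exact absurd (hmin y) (not_le.2 hlt)
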